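/- arXiv:2402.12181 — 2 statements merged into one kernel-verified Lean document; each statement's English description precedes it below -/
import Mathlib

section
/- Let I and A be finite nonempty types, let P : I → ℝ be a probability mass function on I, let g : A → ℝ and, for each ν ∈ I, p_ν : A → ℝ be probability mass functions that are everywhere positive on A. Define ℓ(ν) = D_KL(p_ν‖g), c(ν) = max_{a∈A} |log p_ν(a) − log g(a)|, and D_{η,ν} = D_KL(p_η‖p_ν). Then the variance Σ_{ν} P(ν)·(ℓ(ν) − Σ_{η} P(η)·ℓ(η))² satisfies Σ_{ν} P(ν)·(ℓ(ν) − Σ_{η} P(η)·ℓ(η))² ≤ Σ_{ν} P(ν)·( Σ_{η} P(η)·( D_{η,ν} + c(ν)·√(2·D_{η,ν}) ) )². -/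
/-- Kullback–Leibler divergence (natural log) between two PMFs on a finite type. -/
noncomputable def KLdiv {A : Type*} [Fintype A] (q p : A → ℝ) : ℝ :=
  ∑ a, q a * Real.log (q a / p a)

private noncomputable def F1aux : ℝ → ℝ :=
  fun t => Real.log t - 3*((t-1)*(t+5))/(2*(t+2)^2)

private noncomputable def Faux : ℝ → ℝ :=
  fun t => t * Real.log t - t + 1 - 3*(t-1)^2/(2*(t+2))

private lemma hasDerivAt_F1aux {t : ℝ} (ht : 0 < t) :
    HasDerivAt F1aux (1/t - 27/(t+2)^3) t := by
  have h1 : HasDerivAt Real.log t⁻¹ t := Real.hasDerivAt_log ht.ne'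
  have hu : HasDerivAt (fun y : ℝ => 3*((y-1)*(y+5))) (3*(1*(t+5) + (t-1)*1)) t :=
    HasDerivAt.const_mul 3 (((hasDerivAt_id t).sub_const 1).mul ((hasDerivAt_id t).add_const 5))
  have hv : HasDerivAt (fun y : ℝ => 2*(y+2)^2) (2*((2:ℕ)*(t+2)^1*1)) t :=
    HasDerivAt.const_mul 2 (((hasDerivAt_id t).add_const 2).pow 2)
  have hne : (2:ℝ)*(t+2)^2 ≠ 0 := by positivity
  have hdiv := hu.div hv hne
  have := h1.sub hdiv
  refine this.congr_deriv ?_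
  have h2 : t + 2 ≠ 0 := by positivity
  field_simp
  ring

private lemma hasDerivAt_Faux {t : ℝ} (ht : 0 < t) :
    HasDerivAt Faux (F1aux t) t := by
  have h1 : HasDerivAt (fun y : ℝ => y * Real.log y) (1 * Real.log t + t * t⁻¹) t :=
    (hasDerivAt_id t).mul (Real.hasDerivAt_log ht.ne')
  have hu : HasDerivAt (fun y : ℝ => 3*(y-1)^2) (3*((2:ℕ)*(t-1)^1*1)) t :=
    HasDerivAt.const_mul 3 (((hasDerivAt_id t).sub_const 1).pow 2)
  have hv : HasDerivAt (fun y : ℝ => 2*(y+2)) (2*1) t :=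
    HasDerivAt.const_mul 2 ((hasDerivAt_id t).add_const 2)
  have hne : (2:ℝ)*(t+2) ≠ 0 := by positivity
  have hdiv := hu.div hv hne
  have := ((h1.sub (hasDerivAt_id t)).add_const 1).sub hdiv
  refine this.congr_deriv ?_
  unfold F1aux
  have h2 : t + 2 ≠ 0 := by positivity
  rw [mul_inv_cancel₀ ht.ne']
  field_simp
  ring

private lemma deriv_F1aux_nonneg {x : ℝ} (hx : 0 < x) : 0 ≤ 1/x - 27/(x+2)^3 := by
  have h3 : (0:ℝ) < (x+2)^3 := by positivity
  have key : 27 * x ≤ (x+2)^3 := by nlinarith [sq_nonneg (x-1), hx.le]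
  have : 27/(x+2)^3 ≤ 1/x := by
    rw [div_le_div_iff₀ h3 hx]; linarith
  linarith

private lemma F1aux_nonneg {t : ℝ} (ht : 1 ≤ t) : 0 ≤ F1aux t := by
  have hmono : MonotoneOn F1aux (Set.Ici (1:ℝ)) := by
    apply monotoneOn_of_hasDerivWithinAt_nonneg (convex_Ici 1)
      (f' := fun t => 1/t - 27/(t+2)^3)
    · intro x hx
      exact (hasDerivAt_F1aux (lt_of_lt_of_le one_pos hx)).continuousAt.continuousWithinAt
    · intro x hx
      rw [interior_Ici] at hx
      exact (hasDerivAt_F1aux (lt_trans one_pos hx)).hasDerivWithinAt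
    · intro x hx
      rw [interior_Ici] at hx
      exact deriv_F1aux_nonneg (lt_trans one_pos hx)
  have h1 : F1aux 1 = 0 := by unfold F1aux; norm_num
  have := hmono (Set.self_mem_Ici) (Set.mem_Ici.2 ht) ht
  rw [h1] at this; exact this

private lemma F1aux_nonpos {t : ℝ} (ht0 : 0 < t) (ht : t ≤ 1) : F1aux t ≤ 0 := by
  have hmono : MonotoneOn F1aux (Set.Ioc (0:ℝ) 1) := by
    apply monotoneOn_of_hasDerivWithinAt_nonneg (convex_Ioc 0 1)
      (f' := fun t => 1/t - 27/(t+2)^3)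
    · intro x hx
      exact (hasDerivAt_F1aux hx.1).continuousAt.continuousWithinAt
    · intro x hx
      rw [interior_Ioc] at hx
      exact (hasDerivAt_F1aux hx.1).hasDerivWithinAt
    · intro x hx
      rw [interior_Ioc] at hx
      exact deriv_F1aux_nonneg hx.1
  have h1 : F1aux 1 = 0 := by unfold F1aux; norm_num
  have := hmono (Set.mem_Ioc.2 ⟨ht0, ht⟩) (Set.mem_Ioc.2 ⟨one_pos, le_refl 1⟩) ht
  rw [h1] at this; exact this

private lemma key_ineq {t : ℝ} (ht : 0 < t) :
    3*(t-1)^2/(2*(t+2)) ≤ t * Real.log t - t + 1 := by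
  have hF1 : Faux 1 = 0 := by unfold Faux; norm_num
  have hF : 0 ≤ Faux t := by
    rcases le_total 1 t with h | h
    · have hmono : MonotoneOn Faux (Set.Ici (1:ℝ)) := by
        apply monotoneOn_of_hasDerivWithinAt_nonneg (convex_Ici 1) (f' := F1aux)
        · intro x hx
          exact (hasDerivAt_Faux (lt_of_lt_of_le one_pos hx)).continuousAt.continuousWithinAt
        · intro x hx
          rw [interior_Ici] at hx
          exact (hasDerivAt_Faux (lt_trans one_pos hx)).hasDerivWithinAt
        · intro x hx
          rw [interior_Ici] at hx
          exact F1aux_nonneg hx.le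
      have := hmono Set.self_mem_Ici (Set.mem_Ici.2 h) h
      rw [hF1] at this; exact this
    · have hanti : AntitoneOn Faux (Set.Ioc (0:ℝ) 1) := by
        apply antitoneOn_of_hasDerivWithinAt_nonpos (convex_Ioc 0 1) (f' := F1aux)
        · intro x hx
          exact (hasDerivAt_Faux hx.1).continuousAt.continuousWithinAt
        · intro x hx
          rw [interior_Ioc] at hx
          exact (hasDerivAt_Faux hx.1).hasDerivWithinAt
        · intro x hx
          rw [interior_Ioc] at hx
          exact F1aux_nonpos hx.1 hx.2.le
      have := hanti (Set.mem_Ioc.2 ⟨ht, h⟩) (Set.mem_Ioc.2 ⟨one_pos, le_refl 1⟩) h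
      rw [hF1] at this; exact this
  unfold Faux at hF; linarith

/-- Pinsker's inequality for positive PMFs on a finite type. -/
private lemma pinsker {A : Type*} [Fintype A] (q p : A → ℝ)
    (hq : ∀ a, 0 < q a) (hp : ∀ a, 0 < p a)
    (hqsum : ∑ a, q a = 1) (hpsum : ∑ a, p a = 1) :
    (∑ a, |q a - p a|) ^ 2 ≤ 2 * KLdiv q p := by
  have hlow : ∀ a, 3*(q a - p a)^2/(2*(q a + 2*p a))
      ≤ q a * Real.log (q a / p a) - q a + p a := by
    intro a
    have hpa := hp a
    have hqa := hq a
    have ht : 0 < q a / p a := div_pos hqa hpa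
    have hmul := mul_le_mul_of_nonneg_left (key_ineq ht) hpa.le
    calc 3*(q a - p a)^2/(2*(q a + 2*p a))
        = p a * (3*(q a / p a - 1)^2/(2*(q a / p a + 2))) := by
          field_simp <;> ring
      _ ≤ p a * (q a / p a * Real.log (q a / p a) - q a / p a + 1) := hmul
      _ = q a * Real.log (q a / p a) - q a + p a := by
          field_simp <;> ring
  have hKL : (3/2) * ∑ a, (q a - p a)^2/(q a + 2*p a) ≤ KLdiv q p := by
    have hs : ∑ a, 3*(q a - p a)^2/(2*(q a + 2*p a))
        ≤ ∑ a, (q a * Real.log (q a / p a) - q a + p a) :=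
      Finset.sum_le_sum fun a _ => hlow a
    calc (3/2) * ∑ a, (q a - p a)^2/(q a + 2*p a)
        = ∑ a, 3*(q a - p a)^2/(2*(q a + 2*p a)) := by
          rw [Finset.mul_sum]
          apply Finset.sum_congr rfl
          intro a _
          have h1 : q a + 2*p a ≠ 0 := by have := hq a; have := hp a; positivity
          field_simp <;> ring
      _ ≤ ∑ a, (q a * Real.log (q a / p a) - q a + p a) := hs
      _ = KLdiv q p := by
          rw [Finset.sum_add_distrib, Finset.sum_sub_distrib, hqsum, hpsum]
          unfold KLdiv; ring
  have hCS : (∑ a, |q a - p a|) ^ 2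
      ≤ (∑ a, (q a - p a)^2/(q a + 2*p a)) * ∑ a, (q a + 2*p a) := by
    apply Finset.sum_sq_le_sum_mul_sum_of_sq_eq_mul
    · intro a _; have := hq a; have := hp a; positivity
    · intro a _; have := hq a; have := hp a; positivity
    · intro a _
      have h1 : q a + 2*p a ≠ 0 := by have := hq a; have := hp a; positivity
      rw [sq_abs, div_mul_cancel₀ _ h1]
  have hden : ∑ a, (q a + 2*p a) = 3 := by
    rw [Finset.sum_add_distrib, hqsum, ← Finset.mul_sum, hpsum]; norm_num
  rw [hden] at hCS
  nlinarith [hCS, hKL]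

/-- Proposition 2 of the paper, single-sample form: with
`ℓ(ν) = D_KL(p_ν‖g)`, `c(ν) = max_a |log (p_ν a) − log (g a)|` and
`D_{η,ν} = D_KL(p_η‖p_ν)`, the variance of `ℓ` under `P` is bounded by
`∑_ν P ν · (∑_η P η · (D_{η,ν} + c ν · √(2·D_{η,ν})))²`. -/
theorem stmt_6 {I A : Type*} [Fintype I] [Nonempty I] [Fintype A] [Nonempty A]
    (P : I → ℝ) (hP : ∀ ν, 0 ≤ P ν) (hPsum : ∑ ν, P ν = 1)
    (g : A → ℝ) (hg : ∀ a, 0 < g a) (hgsum : ∑ a, g a = 1)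
    (p : I → A → ℝ) (hp : ∀ ν a, 0 < p ν a) (hpsum : ∀ ν, ∑ a, p ν a = 1)
    (ℓ c : I → ℝ) (D : I → I → ℝ)
    (hℓ : ∀ ν, ℓ ν = KLdiv (p ν) g)
    (hc : ∀ ν, c ν = Finset.univ.sup' Finset.univ_nonempty
                       fun a => |Real.log (p ν a) - Real.log (g a)|)
    (hD : ∀ η ν, D η ν = KLdiv (p η) (p ν)) :
    ∑ ν, P ν * (ℓ ν - ∑ η, P η * ℓ η) ^ 2
      ≤ ∑ ν, P ν * (∑ η, P η * (D η ν + c ν * Real.sqrt (2 * D η ν))) ^ 2 := by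
  have hc_ge : ∀ ν a, |Real.log (p ν a) - Real.log (g a)| ≤ c ν := by
    intro ν a; rw [hc ν]
    exact Finset.le_sup' (fun a => |Real.log (p ν a) - Real.log (g a)|) (Finset.mem_univ a)
  have hc0 : ∀ ν, 0 ≤ c ν := fun ν =>
    le_trans (abs_nonneg _) (hc_ge ν (Classical.arbitrary A))
  have hpinsker : ∀ η ν, (∑ a, |p η a - p ν a|) ^ 2 ≤ 2 * D η ν := by
    intro η ν; rw [hD]
    exact pinsker _ _ (hp η) (hp ν) (hpsum η) (hpsum ν)
  have hD0 : ∀ η ν, 0 ≤ D η ν := by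
    intro η ν
    nlinarith [hpinsker η ν, sq_nonneg (∑ a, |p η a - p ν a|)]
  have hl1 : ∀ η ν, ∑ a, |p η a - p ν a| ≤ Real.sqrt (2 * D η ν) := by
    intro η ν
    exact Real.le_sqrt_of_sq_le (hpinsker η ν)
  have hpair : ∀ η ν, |ℓ ν - ℓ η| ≤ D η ν + c ν * Real.sqrt (2 * D η ν) := by
    intro η ν
    have hdecomp : ℓ η - ℓ ν = D η ν
        + ∑ a, (p η a - p ν a) * (Real.log (p ν a) - Real.log (g a)) := by
      rw [hℓ, hℓ, hD]
      unfold KLdiv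
      rw [← Finset.sum_add_distrib, ← Finset.sum_sub_distrib]
      apply Finset.sum_congr rfl
      intro a _
      rw [Real.log_div (hp η a).ne' (hg a).ne', Real.log_div (hp η a).ne' (hp ν a).ne',
        Real.log_div (hp ν a).ne' (hg a).ne']
      ring
    have hbound : |∑ a, (p η a - p ν a) * (Real.log (p ν a) - Real.log (g a))|
        ≤ c ν * Real.sqrt (2 * D η ν) := by
      calc |∑ a, (p η a - p ν a) * (Real.log (p ν a) - Real.log (g a))|
          ≤ ∑ a, |(p η a - p ν a) * (Real.log (p ν a) - Real.log (g a))| :=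
            Finset.abs_sum_le_sum_abs _ _
        _ ≤ ∑ a, |p η a - p ν a| * c ν := by
            apply Finset.sum_le_sum
            intro a _
            rw [abs_mul]
            exact mul_le_mul_of_nonneg_left (hc_ge ν a) (abs_nonneg _)
        _ = (∑ a, |p η a - p ν a|) * c ν := by rw [← Finset.sum_mul]
        _ ≤ Real.sqrt (2 * D η ν) * c ν :=
            mul_le_mul_of_nonneg_right (hl1 η ν) (hc0 ν)
        _ = c ν * Real.sqrt (2 * D η ν) := mul_comm _ _
    rw [abs_sub_comm]
    rw [abs_le] at hbound ⊢
    constructor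
    · nlinarith [hbound.1, hD0 η ν]
    · nlinarith [hbound.2, hD0 η ν]
  apply Finset.sum_le_sum
  intro ν _
  apply mul_le_mul_of_nonneg_left _ (hP ν)
  have h1 : ∑ η, P η * (ℓ ν - ℓ η) = ℓ ν - ∑ η, P η * ℓ η := by
    simp only [mul_sub]
    rw [Finset.sum_sub_distrib, ← Finset.sum_mul, hPsum, one_mul]
  rw [← h1]
  have habs : |∑ η, P η * (ℓ ν - ℓ η)|
      ≤ ∑ η, P η * (D η ν + c ν * Real.sqrt (2 * D η ν)) := by
    calc |∑ η, P η * (ℓ ν - ℓ η)| ≤ ∑ η, |P η * (ℓ ν - ℓ η)| :=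
          Finset.abs_sum_le_sum_abs _ _
      _ ≤ ∑ η, P η * (D η ν + c ν * Real.sqrt (2 * D η ν)) := by
          apply Finset.sum_le_sum
          intro η _
          rw [abs_mul, abs_of_nonneg (hP η)]
          exact mul_le_mul_of_nonneg_left (hpair η ν) (hP η)
  calc (∑ η, P η * (ℓ ν - ℓ η)) ^ 2 = |∑ η, P η * (ℓ ν - ℓ η)| ^ 2 := (sq_abs _).symm
    _ ≤ (∑ η, P η * (D η ν + c ν * Real.sqrt (2 * D η ν))) ^ 2 := by
        apply pow_le_pow_left₀ (abs_nonneg _) habs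
end

section
/- Let I and A be finite nonempty types, let P : I → ℝ be a probability mass function on I, and for each μ ∈ I let p_μ : A → ℝ be an everywhere-positive probability mass function on A. Let Q̄ : A → ℝ and γ ≥ 0. Define Y(μ) = γ·Σ_{a∈A} p_μ(a)·Q̄(a) and D_{η,μ} = D_KL(p_η‖p_μ). Then Σ_{μ} P(μ)·(Y(μ) − Σ_{η} P(η)·Y(η))² ≤ Σ_{μ} P(μ)·γ²·( (max_{a∈A} |Q̄(a)|)·Σ_{η} P(η)·√(2·D_{η,μ}) )². -/
open Real Finset

private lemma aux_h_mono : MonotoneOn (fun t : ℝ => (t + 1) * Real.log t - 2 * (t - 1)) (Set.Ioi 0) := by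
  have hderiv : ∀ t : ℝ, t ≠ 0 →
      HasDerivAt (fun t : ℝ => (t + 1) * Real.log t - 2 * (t - 1))
        (Real.log t + (t + 1) * t⁻¹ - 2) t := by
    intro t ht
    have h1 : HasDerivAt (fun t : ℝ => (t + 1) * Real.log t)
        (1 * Real.log t + (t + 1) * t⁻¹) t :=
      ((hasDerivAt_id t).add_const 1).mul (Real.hasDerivAt_log ht)
    have h2 : HasDerivAt (fun t : ℝ => 2 * (t - 1)) 2 t := by
      simpa using ((hasDerivAt_id t).sub_const 1).const_mul 2
    have : HasDerivAt (fun t : ℝ => (t + 1) * Real.log t - 2 * (t - 1))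
        (1 * Real.log t + (t + 1) * t⁻¹ - 2) t := h1.sub h2
    convert this using 1
    ring
  have hint : interior (Set.Ioi (0:ℝ)) = Set.Ioi 0 := interior_Ioi
  apply monotoneOn_of_deriv_nonneg (convex_Ioi 0)
  · intro t ht
    exact (hderiv t (ne_of_gt ht)).differentiableAt.continuousAt.continuousWithinAt
  · rw [hint]
    intro t ht
    exact (hderiv t (ne_of_gt ht)).differentiableAt.differentiableWithinAt
  · rw [hint]
    intro t ht
    rw [(hderiv t (ne_of_gt ht)).deriv]
    have hlog : 1 - t⁻¹ ≤ Real.log t := by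
      have h := Real.log_le_sub_one_of_pos (inv_pos.2 (Set.mem_Ioi.1 ht))
      rw [Real.log_inv] at h
      linarith
    have htne : t * t⁻¹ = 1 := mul_inv_cancel₀ (ne_of_gt ht)
    nlinarith [ht]

private lemma aux_h_sign (t : ℝ) (ht : 0 < t) :
    (1 ≤ t → 0 ≤ (t + 1) * Real.log t - 2 * (t - 1)) ∧
    (t ≤ 1 → (t + 1) * Real.log t - 2 * (t - 1) ≤ 0) := by
  have h1 : (fun t : ℝ => (t + 1) * Real.log t - 2 * (t - 1)) 1 = 0 := by simp
  constructor
  · intro hle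
    have := aux_h_mono (Set.mem_Ioi.2 one_pos) (Set.mem_Ioi.2 ht) hle
    simpa [h1] using this
  · intro hle
    have := aux_h_mono (Set.mem_Ioi.2 ht) (Set.mem_Ioi.2 one_pos) hle
    simpa [h1] using this

private lemma aux_hasDerivAt_g (t : ℝ) (ht : t ≠ 0) :
    HasDerivAt (fun t : ℝ => (t + 2) * (t * Real.log t - t + 1) - 3 / 2 * (t - 1) ^ 2)
      (2 * ((t + 1) * Real.log t - 2 * (t - 1))) t := by
  have h1 : HasDerivAt (fun t : ℝ => t * Real.log t) (Real.log t + 1) t :=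
    Real.hasDerivAt_mul_log ht
  have h2 : HasDerivAt (fun t : ℝ => t * Real.log t - t + 1) (Real.log t + 1 - 1) t :=
    (h1.sub (hasDerivAt_id t)).add_const 1
  have h3 : HasDerivAt (fun t : ℝ => t + 2) 1 t := (hasDerivAt_id t).add_const 2
  have h4 := h3.mul h2
  have h5 : HasDerivAt (fun t : ℝ => 3 / 2 * (t - 1) ^ 2)
      (3 / 2 * ((2 : ℕ) * (t - 1) ^ 1 * 1)) t :=
    (((hasDerivAt_id t).sub_const 1).pow 2).const_mul (3 / 2)
  have : HasDerivAt (fun t : ℝ => (t + 2) * (t * Real.log t - t + 1) - 3 / 2 * (t - 1) ^ 2)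
      _ t := h4.sub h5
  convert this using 1
  push_cast
  ring

private lemma aux_g_nonneg (t : ℝ) (ht : 0 < t) :
    3 / 2 * (t - 1) ^ 2 ≤ (t + 2) * (t * Real.log t - t + 1) := by
  set g : ℝ → ℝ := fun t => (t + 2) * (t * Real.log t - t + 1) - 3 / 2 * (t - 1) ^ 2 with hg
  have hg1 : g 1 = 0 := by simp [hg]
  have hgoal : 0 ≤ g t → 3 / 2 * (t - 1) ^ 2 ≤ (t + 2) * (t * Real.log t - t + 1) := by
    intro h; simp only [hg] at h; linarith
  apply hgoal
  rcases le_total 1 t with hle | hle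
  · have hmono : MonotoneOn g (Set.Ici 1) := by
      apply monotoneOn_of_deriv_nonneg (convex_Ici 1)
      · intro x hx
        have hx0 : x ≠ 0 := by simp at hx; linarith
        exact (aux_hasDerivAt_g x hx0).differentiableAt.continuousAt.continuousWithinAt
      · rw [interior_Ici]
        intro x hx
        have hx0 : x ≠ 0 := by simp at hx; linarith
        exact (aux_hasDerivAt_g x hx0).differentiableAt.differentiableWithinAt
      · rw [interior_Ici]
        intro x hx
        simp only [Set.mem_Ioi] at hx
        rw [(aux_hasDerivAt_g x (by linarith)).deriv]
        have := (aux_h_sign x (by linarith)).1 hx.le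
        linarith
    have := hmono (Set.mem_Ici.2 le_rfl) (Set.mem_Ici.2 hle) hle
    rw [hg1] at this; exact this
  · have hanti : AntitoneOn g (Set.Ioc 0 1) := by
      apply antitoneOn_of_deriv_nonpos (convex_Ioc 0 1)
      · intro x hx
        exact (aux_hasDerivAt_g x (ne_of_gt hx.1)).differentiableAt.continuousAt.continuousWithinAt
      · rw [interior_Ioc]
        intro x hx
        exact (aux_hasDerivAt_g x (ne_of_gt hx.1)).differentiableAt.differentiableWithinAt
      · rw [interior_Ioc]
        intro x hx
        rw [(aux_hasDerivAt_g x (ne_of_gt hx.1)).deriv]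
        have := (aux_h_sign x hx.1).2 hx.2.le
        linarith
    have := hanti (Set.mem_Ioc.2 ⟨ht, hle⟩) (Set.mem_Ioc.2 ⟨one_pos, le_rfl⟩) hle
    rw [hg1] at this; exact this

private lemma aux_pointwise (pa qa : ℝ) (hpa : 0 < pa) (hqa : 0 < qa) :
    3 / 2 * (qa - pa) ^ 2 ≤ (qa + 2 * pa) * (qa * Real.log (qa / pa) - qa + pa) := by
  set t : ℝ := qa / pa with htdef
  have ht : 0 < t := div_pos hqa hpa
  have hqe : qa = pa * t := by rw [htdef]; field_simp
  have key := aux_g_nonneg t ht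
  have h2 : pa * pa * (3 / 2 * (t - 1) ^ 2) ≤ pa * pa * ((t + 2) * (t * Real.log t - t + 1)) :=
    mul_le_mul_of_nonneg_left key (mul_self_nonneg pa)
  calc 3 / 2 * (qa - pa) ^ 2 = pa * pa * (3 / 2 * (t - 1) ^ 2) := by rw [hqe]; ring
    _ ≤ pa * pa * ((t + 2) * (t * Real.log t - t + 1)) := h2
    _ = (qa + 2 * pa) * (qa * Real.log t - qa + pa) := by rw [hqe]; ring

/-- Pinsker's inequality (finite, everywhere positive PMFs). -/
private lemma aux_pinsker {A : Type*} [Fintype A] (q p : A → ℝ)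
    (hq : ∀ a, 0 < q a) (hp : ∀ a, 0 < p a)
    (hqs : ∑ a, q a = 1) (hps : ∑ a, p a = 1) :
    (∑ a, |q a - p a|) ^ 2 ≤ 2 * KLdiv q p := by
  set w : A → ℝ := fun a => q a + 2 * p a with hw
  have hwpos : ∀ a, 0 < w a := fun a => by have := hq a; have := hp a; simp [hw]; linarith
  have hwsum : ∑ a, w a = 3 := by
    simp [hw, Finset.sum_add_distrib, ← Finset.mul_sum, hqs, hps]; ring
  have hCS := Finset.sum_mul_sq_le_sq_mul_sq Finset.univ
    (fun a => Real.sqrt (w a)) (fun a => |q a - p a| / Real.sqrt (w a))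
  have hrw1 : ∀ a : A, Real.sqrt (w a) * (|q a - p a| / Real.sqrt (w a)) = |q a - p a| := by
    intro a
    rw [mul_div_cancel₀ _ (ne_of_gt (Real.sqrt_pos.2 (hwpos a)))]
  have hrw2 : ∀ a : A, Real.sqrt (w a) ^ 2 = w a := fun a => Real.sq_sqrt (hwpos a).le
  have hrw3 : ∀ a : A, (|q a - p a| / Real.sqrt (w a)) ^ 2 = (q a - p a) ^ 2 / w a := by
    intro a
    rw [div_pow, sq_abs, hrw2]
  rw [Finset.sum_congr rfl (fun a _ => hrw1 a), Finset.sum_congr rfl (fun a _ => hrw2 a),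
    Finset.sum_congr rfl (fun a _ => hrw3 a), hwsum] at hCS
  have hpt : ∀ a : A, (q a - p a) ^ 2 / w a ≤
      2 / 3 * (q a * Real.log (q a / p a) - q a + p a) := by
    intro a
    have h := aux_pointwise (p a) (q a) (hp a) (hq a)
    rw [div_le_iff₀ (hwpos a)]
    simp only [hw]
    nlinarith [h]
  have hsum2 : ∑ a, (q a - p a) ^ 2 / w a ≤ 2 / 3 * KLdiv q p := by
    calc ∑ a, (q a - p a) ^ 2 / w a
        ≤ ∑ a, 2 / 3 * (q a * Real.log (q a / p a) - q a + p a) :=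
          Finset.sum_le_sum (fun a _ => hpt a)
      _ = 2 / 3 * KLdiv q p := by
          rw [← Finset.mul_sum]
          congr 1
          simp [KLdiv, Finset.sum_add_distrib, Finset.sum_sub_distrib, hqs, hps]
  calc (∑ a, |q a - p a|) ^ 2 ≤ 3 * ∑ a, (q a - p a) ^ 2 / w a := hCS
    _ ≤ 3 * (2 / 3 * KLdiv q p) := by linarith
    _ = 2 * KLdiv q p := by ring

private lemma aux_l1_le_sqrt {A : Type*} [Fintype A] (q p : A → ℝ)
    (hq : ∀ a, 0 < q a) (hp : ∀ a, 0 < p a)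
    (hqs : ∑ a, q a = 1) (hps : ∑ a, p a = 1) :
    ∑ a, |q a - p a| ≤ Real.sqrt (2 * KLdiv q p) := by
  have h := aux_pinsker q p hq hp hqs hps
  have hnn : 0 ≤ ∑ a, |q a - p a| := Finset.sum_nonneg fun a _ => abs_nonneg _
  have hy : 0 ≤ 2 * KLdiv q p := le_trans (sq_nonneg _) h
  exact (Real.le_sqrt hnn hy).2 h

/-- DDPG case, Appendix F: with `Y μ = γ·∑_a p_μ a · Q̄ a` and
`D_{η,μ} = D_KL(p_η‖p_μ)`, the variance of `Y` under `P` is bounded by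
`∑_μ P μ · γ² · ((max_a |Q̄ a|)·∑_η P η·√(2·D_{η,μ}))²`. -/
theorem stmt_9 {I A : Type*} [Fintype I] [Nonempty I] [Fintype A] [Nonempty A]
    (P : I → ℝ) (hP : ∀ μ, 0 ≤ P μ) (hPsum : ∑ μ, P μ = 1)
    (p : I → A → ℝ) (hp : ∀ μ a, 0 < p μ a) (hpsum : ∀ μ, ∑ a, p μ a = 1)
    (Qbar : A → ℝ) (γ : ℝ) (hγ : 0 ≤ γ)
    (Y : I → ℝ) (D : I → I → ℝ)
    (hY : ∀ μ, Y μ = γ * ∑ a, p μ a * Qbar a)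
    (hD : ∀ η μ, D η μ = KLdiv (p η) (p μ)) :
    ∑ μ, P μ * (Y μ - ∑ η, P η * Y η) ^ 2
      ≤ ∑ μ, P μ * γ ^ 2 *
          ((Finset.univ.sup' Finset.univ_nonempty fun a => |Qbar a|)
            * ∑ η, P η * Real.sqrt (2 * D η μ)) ^ 2 := by
  set M : ℝ := Finset.univ.sup' Finset.univ_nonempty fun a => |Qbar a| with hM
  have hMle : ∀ a : A, |Qbar a| ≤ M := fun a =>
    Finset.le_sup' (fun a => |Qbar a|) (Finset.mem_univ a)
  have hM0 : 0 ≤ M := le_trans (abs_nonneg _) (hMle (Classical.arbitrary A))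
  apply Finset.sum_le_sum
  intro μ _
  -- pointwise bound on |Y μ - Y η|
  have hYd : ∀ η : I, |Y μ - Y η| ≤ γ * (M * Real.sqrt (2 * D η μ)) := by
    intro η
    have h1 : Y μ - Y η = γ * ∑ a, (p μ a - p η a) * Qbar a := by
      rw [hY, hY, ← mul_sub, ← Finset.sum_sub_distrib]
      congr 1; apply Finset.sum_congr rfl; intro a _; ring
    have h2 : |∑ a, (p μ a - p η a) * Qbar a| ≤ M * ∑ a, |p η a - p μ a| := by
      calc |∑ a, (p μ a - p η a) * Qbar a| ≤ ∑ a, |(p μ a - p η a) * Qbar a| :=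
            Finset.abs_sum_le_sum_abs _ _
        _ ≤ ∑ a, |p η a - p μ a| * M := by
            apply Finset.sum_le_sum; intro a _
            rw [abs_mul, abs_sub_comm]
            exact mul_le_mul_of_nonneg_left (hMle a) (abs_nonneg _)
        _ = M * ∑ a, |p η a - p μ a| := by rw [← Finset.sum_mul]; ring
    have h3 : ∑ a, |p η a - p μ a| ≤ Real.sqrt (2 * D η μ) := by
      rw [hD]
      exact aux_l1_le_sqrt (p η) (p μ) (hp η) (hp μ) (hpsum η) (hpsum μ)
    calc |Y μ - Y η| = γ * |∑ a, (p μ a - p η a) * Qbar a| := by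
          rw [h1, abs_mul, abs_of_nonneg hγ]
      _ ≤ γ * (M * ∑ a, |p η a - p μ a|) := mul_le_mul_of_nonneg_left h2 hγ
      _ ≤ γ * (M * Real.sqrt (2 * D η μ)) :=
          mul_le_mul_of_nonneg_left (mul_le_mul_of_nonneg_left h3 hM0) hγ
  have hdev : |Y μ - ∑ η, P η * Y η| ≤ γ * (M * ∑ η, P η * Real.sqrt (2 * D η μ)) := by
    have he : Y μ - ∑ η, P η * Y η = ∑ η, P η * (Y μ - Y η) := by
      simp only [mul_sub]
      rw [Finset.sum_sub_distrib, ← Finset.sum_mul, hPsum, one_mul]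
    calc |Y μ - ∑ η, P η * Y η| = |∑ η, P η * (Y μ - Y η)| := by rw [he]
      _ ≤ ∑ η, |P η * (Y μ - Y η)| := Finset.abs_sum_le_sum_abs _ _
      _ ≤ ∑ η, P η * (γ * (M * Real.sqrt (2 * D η μ))) := by
          apply Finset.sum_le_sum; intro η _
          rw [abs_mul, abs_of_nonneg (hP η)]
          exact mul_le_mul_of_nonneg_left (hYd η) (hP η)
      _ = γ * (M * ∑ η, P η * Real.sqrt (2 * D η μ)) := by
          rw [Finset.mul_sum, Finset.mul_sum]
          apply Finset.sum_congr rfl; intro η _; ring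
  have hsq : (Y μ - ∑ η, P η * Y η) ^ 2
      ≤ (γ * (M * ∑ η, P η * Real.sqrt (2 * D η μ))) ^ 2 := by
    rw [← sq_abs (Y μ - ∑ η, P η * Y η)]
    exact pow_le_pow_left₀ (abs_nonneg _) hdev 2
  calc P μ * (Y μ - ∑ η, P η * Y η) ^ 2
      ≤ P μ * (γ * (M * ∑ η, P η * Real.sqrt (2 * D η μ))) ^ 2 :=
        mul_le_mul_of_nonneg_left hsq (hP μ)
    _ = P μ * γ ^ 2 * (M * ∑ η, P η * Real.sqrt (2 * D η μ)) ^ 2 := by ring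
end
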